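/- A vector b* ∈ ℝ^p minimizes the causally regularized population risk b ↦ E[((Y − Xᵀb) − E[Y − Xᵀb | σ(A)])²] + γ · E[(E[Y − Xᵀb | σ(A)])²] over ℝ^p if and only if b* minimizes the worst-case shift-perturbed risk b ↦ sup { E[(Y^{Mδ} − (X^{Mδ})ᵀ b)²] : δ : Ω → ℝ^r square-integrable, E[ε δᵀ] = 0, γE[AAᵀ] − E[δδᵀ] positive semidefinite } over ℝ^p. -/

import Mathlib

open MeasureTheory ProbabilityTheory

private lemma integrable_mul_of_memL2 {Ω : Type*} [MeasurableSpace Ω] {μ : Measure Ω}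
    (f g : Ω → ℝ) (hf : MemLp f 2 μ) (hg : MemLp g 2 μ) :
    Integrable (fun ω => f ω * g ω) μ := by
  have hf2 : Integrable (fun ω => f ω ^ 2) μ := (memLp_two_iff_integrable_sq hf.1).mp hf
  have hg2 : Integrable (fun ω => g ω ^ 2) μ := (memLp_two_iff_integrable_sq hg.1).mp hg
  refine Integrable.mono' ((hf2.add hg2).const_mul (1/2)) (hf.1.mul hg.1) ?_
  filter_upwards with ω
  simp only [Pi.add_apply]
  rw [Real.norm_eq_abs, abs_mul]
  have h2 := two_mul_le_add_sq |f ω| |g ω|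
  rw [sq_abs, sq_abs] at h2
  nlinarith [abs_nonneg (f ω), abs_nonneg (g ω)]

private lemma integral_sum_mul_sum {Ω : Type*} [MeasurableSpace Ω] {μ : Measure Ω}
    {ι κ : Type*} [Fintype ι] [Fintype κ]
    (c : ι → ℝ) (d : κ → ℝ) (F : ι → Ω → ℝ) (G : κ → Ω → ℝ)
    (hF : ∀ i, MemLp (F i) 2 μ) (hG : ∀ j, MemLp (G j) 2 μ) :
    ∫ ω, (∑ i, c i * F i ω) * (∑ j, d j * G j ω) ∂μ
      = ∑ i, ∑ j, c i * d j * ∫ ω, F i ω * G j ω ∂μ := by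
  have hpt : ∀ ω, (∑ i, c i * F i ω) * (∑ j, d j * G j ω)
      = ∑ i, ∑ j, c i * d j * (F i ω * G j ω) := by
    intro ω
    rw [Finset.sum_mul_sum]
    exact Finset.sum_congr rfl fun i _ => Finset.sum_congr rfl fun j _ => by ring
  simp_rw [hpt]
  rw [integral_finset_sum]
  · refine Finset.sum_congr rfl fun i _ => ?_
    rw [integral_finset_sum]
    · exact Finset.sum_congr rfl fun j _ => integral_const_mul _ _
    · intro j _
      exact (integrable_mul_of_memL2 _ _ (hF i) (hG j)).const_mul _
  · intro i _
    exact integrable_finset_sum _ fun j _ =>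
      (integrable_mul_of_memL2 _ _ (hF i) (hG j)).const_mul _

private lemma integral_add_sq {Ω : Type*} [MeasurableSpace Ω] {μ : Measure Ω}
    (f g : Ω → ℝ) (hf : MemLp f 2 μ) (hg : MemLp g 2 μ) :
    ∫ ω, (f ω + g ω)^2 ∂μ
      = ∫ ω, (f ω)^2 ∂μ + 2 * ∫ ω, f ω * g ω ∂μ + ∫ ω, (g ω)^2 ∂μ := by
  have hf2 : Integrable (fun ω => f ω ^ 2) μ := (memLp_two_iff_integrable_sq hf.1).mp hf
  have hg2 : Integrable (fun ω => g ω ^ 2) μ := (memLp_two_iff_integrable_sq hg.1).mp hg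
  have hfg := integrable_mul_of_memL2 f g hf hg
  have hpt : ∀ ω, (f ω + g ω)^2 = f ω^2 + (2*(f ω*g ω) + g ω^2) := fun ω => by ring
  simp_rw [hpt]
  have hI1 : Integrable (fun ω => 2 * (f ω * g ω)) μ := by exact hfg.const_mul 2
  have hI2 : Integrable (fun ω => 2 * (f ω * g ω) + g ω ^ 2) μ := by exact hI1.add hg2
  rw [integral_add hf2 hI2, integral_add hI1 hg2, integral_const_mul]
  ring

private lemma dotProduct_mulVec_eq {ι : Type*} [Fintype ι] (D : Matrix ι ι ℝ) (u : ι → ℝ) :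
    dotProduct u (D.mulVec u) = ∑ i, ∑ j, u i * u j * D i j := by
  simp only [dotProduct, Matrix.mulVec, Finset.mul_sum]
  exact Finset.sum_congr rfl fun i _ => Finset.sum_congr rfl fun j _ => by ring

/-- A vector `b*` minimizes the causally regularized population risk if and only if it minimizes
the worst-case risk over shift perturbations `v = M δ` with `E[ε δᵀ] = 0` and
`E[δ δᵀ] ⪯ γ E[A Aᵀ]`. -/
theorem anchor_regression_argmin_iff
    {Ω : Type*} [MeasureSpace Ω] [IsProbabilityMeasure (ℙ : Measure Ω)]
    (p q r : ℕ) (hp : 1 ≤ p) (hq : 1 ≤ q) (hr : 1 ≤ r)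
    (B : Matrix (Fin (p + 1 + q)) (Fin (p + 1 + q)) ℝ) (hB : IsUnit (1 - B))
    (M : Matrix (Fin (p + 1 + q)) (Fin r) ℝ)
    (A : Ω → Fin r → ℝ) (ε : Ω → Fin (p + 1 + q) → ℝ)
    (hAmeas : Measurable A) (hεmeas : Measurable ε)
    (hA2 : ∀ j, MemLp (fun ω => A ω j) 2 ℙ)
    (hε2 : ∀ i, MemLp (fun ω => ε ω i) 2 ℙ)
    (hAmean : ∀ j, ∫ ω, A ω j ∂ℙ = 0)
    (hεmean : ∀ i, ∫ ω, ε ω i ∂ℙ = 0)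
    (hIndep : IndepFun ε A ℙ)
    (hApd : (Matrix.of fun i j => ∫ ω, A ω i * A ω j ∂ℙ).PosDef)
    (γ : ℝ) (hγ : 0 ≤ γ)
    -- residual `Y^v - (X^v)ᵀ b` of the shift-perturbed system `Z^v = (I-B)⁻¹ (ε + v)`
    (res : (Fin p → ℝ) → (Ω → Fin (p + 1 + q) → ℝ) → Ω → ℝ)
    (hres : ∀ b v ω, res b v ω =
      (1 - B)⁻¹.mulVec (ε ω + v ω) ⟨p, by omega⟩
        - ∑ i : Fin p, b i * (1 - B)⁻¹.mulVec (ε ω + v ω) (Fin.castLE (by omega) i))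
    -- conditional expectation `E[Y - Xᵀ b | σ(A)]` for the unperturbed system (`v = M A`)
    (g : (Fin p → ℝ) → Ω → ℝ)
    (hg : ∀ b, g b = (ℙ : Measure Ω)[res b (fun ω => M.mulVec (A ω)) |
        MeasurableSpace.comap A inferInstance])
    -- the causally regularized population risk
    (regRisk : (Fin p → ℝ) → ℝ)
    (hregRisk : ∀ b, regRisk b =
      ∫ ω, (res b (fun ω' => M.mulVec (A ω')) ω - g b ω) ^ 2 ∂ℙ
        + γ * ∫ ω, (g b ω) ^ 2 ∂ℙ)
    -- the worst-case risk over admissible shift perturbations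
    (worstRisk : (Fin p → ℝ) → ℝ)
    (hworstRisk : ∀ b, worstRisk b = sSup {x : ℝ | ∃ δ : Ω → Fin r → ℝ,
      (∀ j, MemLp (fun ω => δ ω j) 2 ℙ) ∧
      (∀ i j, ∫ ω, ε ω i * δ ω j ∂ℙ = 0) ∧
      (γ • (Matrix.of fun i j => ∫ ω, A ω i * A ω j ∂ℙ)
        - Matrix.of fun i j => ∫ ω, δ ω i * δ ω j ∂ℙ).PosSemidef ∧
      x = ∫ ω, (res b (fun ω' => M.mulVec (δ ω')) ω) ^ 2 ∂ℙ}) :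
    ∀ bstar : Fin p → ℝ,
      (∀ b, regRisk bstar ≤ regRisk b) ↔ (∀ b, worstRisk bstar ≤ worstRisk b) := by
  -- orthogonality of ε and A
  have hAortho : ∀ i j, ∫ ω, ε ω i * A ω j ∂ℙ = 0 := by
    intro i j
    have hind : IndepFun (fun ω => ε ω i) (fun ω => A ω j) ℙ :=
      hIndep.comp (measurable_pi_apply i) (measurable_pi_apply j)
    have h := hind.integral_mul_eq_mul_integral ((hε2 i).integrable one_le_two).aestronglyMeasurable
      ((hA2 j).integrable one_le_two).aestronglyMeasurable
    simpa [Pi.mul_apply, hεmean i, hAmean j] using h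
  suffices hEq : ∀ b, worstRisk b = regRisk b by
    intro bstar
    constructor
    · intro h b; rw [hEq, hEq]; exact h b
    · intro h b; rw [← hEq, ← hEq]; exact h b
  intro b
  set N := (1 - B)⁻¹ with hNdef
  set w : Fin (p + 1 + q) → ℝ :=
    fun k => N ⟨p, by omega⟩ k - ∑ i : Fin p, b i * N (Fin.castLE (by omega) i) k with hw
  set u : Fin r → ℝ := fun j => ∑ k, w k * M k j with hu
  set f : Ω → ℝ := fun ω => ∑ k, w k * ε ω k with hf
  -- pointwise form of the residual
  have e1 : ∀ x : Fin (p + 1 + q) → ℝ,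
      N.mulVec x ⟨p, by omega⟩ - ∑ i : Fin p, b i * N.mulVec x (Fin.castLE (by omega) i)
        = ∑ k, w k * x k := by
    intro x
    simp only [hw, Matrix.mulVec, dotProduct, sub_mul, Finset.sum_sub_distrib,
      Finset.sum_mul, Finset.mul_sum, mul_assoc]
    congr 1
    rw [Finset.sum_comm]
  have e2 : ∀ a : Fin r → ℝ, ∑ k, w k * M.mulVec a k = ∑ j, u j * a j := by
    intro a
    simp only [hu, Matrix.mulVec, dotProduct, Finset.mul_sum, Finset.sum_mul, mul_assoc]
    rw [Finset.sum_comm]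
  have hres' : ∀ (δ : Ω → Fin r → ℝ) ω,
      res b (fun ω' => M.mulVec (δ ω')) ω = f ω + ∑ j, u j * δ ω j := by
    intro δ ω
    rw [hres, e1]
    simp only [Pi.add_apply, mul_add, Finset.sum_add_distrib, hf]
    rw [e2]
  -- L² facts
  have hfL2 : MemLp f 2 ℙ := by
    rw [hf]; exact memLp_finset_sum _ fun k _ => (hε2 k).const_mul (w k)
  have hsumL2 : ∀ (δ : Ω → Fin r → ℝ), (∀ j, MemLp (fun ω => δ ω j) 2 ℙ) →
      MemLp (fun ω => ∑ j, u j * δ ω j) 2 ℙ := fun δ hδ =>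
    memLp_finset_sum _ fun j _ => (hδ j).const_mul (u j)
  -- key risk computation
  have hkey : ∀ (δ : Ω → Fin r → ℝ), (∀ j, MemLp (fun ω => δ ω j) 2 ℙ) →
      (∀ i j, ∫ ω, ε ω i * δ ω j ∂ℙ = 0) →
      ∫ ω, (res b (fun ω' => M.mulVec (δ ω')) ω) ^ 2 ∂ℙ
        = ∫ ω, f ω ^ 2 ∂ℙ + ∑ i, ∑ j, u i * u j * ∫ ω, δ ω i * δ ω j ∂ℙ := by
    intro δ hδ2 hortho
    simp_rw [hres' δ]
    rw [integral_add_sq f _ hfL2 (hsumL2 δ hδ2)]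
    have hcross : ∫ ω, f ω * (∑ j, u j * δ ω j) ∂ℙ = 0 := by
      simp only [hf]
      rw [integral_sum_mul_sum w u (fun k ω => ε ω k) (fun j ω => δ ω j) hε2 hδ2]
      simp [hortho]
    have hsq : ∫ ω, (∑ j, u j * δ ω j) ^ 2 ∂ℙ
        = ∑ i, ∑ j, u i * u j * ∫ ω, δ ω i * δ ω j ∂ℙ := by
      simp_rw [sq]
      exact integral_sum_mul_sum u u (fun i ω => δ ω i) (fun j ω => δ ω j) hδ2 hδ2
    rw [hcross, hsq]
    ring
  -- conditional expectation computation
  have hm : MeasurableSpace.comap A inferInstance ≤ (inferInstance : MeasurableSpace Ω) :=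
    hAmeas.comap_le
  have hcond : g b =ᵐ[ℙ] fun ω => ∑ j, u j * A ω j := by
    rw [hg b]
    have hptA : res b (fun ω => M.mulVec (A ω)) = f + fun ω => ∑ j, u j * A ω j := by
      funext ω; exact hres' A ω
    rw [hptA]
    have h1 : Integrable f ℙ := hfL2.integrable one_le_two
    have h2 : Integrable (fun ω => ∑ j, u j * A ω j) ℙ :=
      (hsumL2 A hA2).integrable one_le_two
    have hfsm : StronglyMeasurable[MeasurableSpace.comap ε inferInstance] f := by
      have hφ : Measurable fun v : Fin (p + 1 + q) → ℝ => ∑ k, w k * v k :=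
        Finset.measurable_sum _ fun k _ => by fun_prop
      exact (hφ.comp (Measurable.of_comap_le le_rfl)).stronglyMeasurable
    have hAsm : StronglyMeasurable[MeasurableSpace.comap A inferInstance]
        (fun ω => ∑ j, u j * A ω j) := by
      have hφ : Measurable fun v : Fin r → ℝ => ∑ j, u j * v j :=
        Finset.measurable_sum _ fun j _ => by fun_prop
      exact (hφ.comp (Measurable.of_comap_le le_rfl)).stronglyMeasurable
    have hind : Indep (MeasurableSpace.comap ε inferInstance)
        (MeasurableSpace.comap A inferInstance) ℙ := (IndepFun_iff_Indep ε A ℙ).mp hIndep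
    have hfint : ∫ ω, f ω ∂ℙ = 0 := by
      simp only [hf]
      rw [integral_finset_sum _ fun k _ => ((hε2 k).integrable one_le_two).const_mul (w k)]
      simp [integral_const_mul, hεmean]
    calc (ℙ : Measure Ω)[f + (fun ω => ∑ j, u j * A ω j)|MeasurableSpace.comap A inferInstance]
        =ᵐ[ℙ] (ℙ : Measure Ω)[f|MeasurableSpace.comap A inferInstance]
          + (ℙ : Measure Ω)[(fun ω => ∑ j, u j * A ω j)|MeasurableSpace.comap A inferInstance] :=
          condExp_add h1 h2 _
      _ =ᵐ[ℙ] (fun _ => ∫ ω, f ω ∂ℙ) + fun ω => ∑ j, u j * A ω j := by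
          refine Filter.EventuallyEq.add (condExp_indep_eq hεmeas.comap_le hm hfsm hind) ?_
          rw [condExp_of_stronglyMeasurable hm hAsm h2]
      _ =ᵐ[ℙ] fun ω => ∑ j, u j * A ω j := by
          rw [hfint]; filter_upwards with ω; simp
  -- the regularized risk in closed form
  have hreg : regRisk b
      = ∫ ω, f ω ^ 2 ∂ℙ + γ * ∑ i, ∑ j, u i * u j * ∫ ω, A ω i * A ω j ∂ℙ := by
    rw [hregRisk b]
    have h1 : ∫ ω, (res b (fun ω' => M.mulVec (A ω')) ω - g b ω) ^ 2 ∂ℙ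
        = ∫ ω, f ω ^ 2 ∂ℙ := by
      refine integral_congr_ae ?_
      filter_upwards [hcond] with ω hω
      rw [hres' A ω, hω]
      ring
    have h2 : ∫ ω, (g b ω) ^ 2 ∂ℙ = ∑ i, ∑ j, u i * u j * ∫ ω, A ω i * A ω j ∂ℙ := by
      have h2' : ∫ ω, (g b ω) ^ 2 ∂ℙ = ∫ ω, (∑ j, u j * A ω j) ^ 2 ∂ℙ := by
        refine integral_congr_ae ?_
        filter_upwards [hcond] with ω hω
        rw [hω]
      rw [h2']
      simp_rw [sq]
      exact integral_sum_mul_sum u u (fun i ω => A ω i) (fun j ω => A ω j) hA2 hA2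
    rw [h1, h2]
  -- pulling out constants from double sums
  have pull : ∀ X : Fin r → Fin r → ℝ,
      ∑ i, ∑ j, u i * u j * (γ * X i j) = γ * ∑ i, ∑ j, u i * u j * X i j := by
    intro X
    rw [Finset.mul_sum]
    refine Finset.sum_congr rfl fun i _ => ?_
    rw [Finset.mul_sum]
    exact Finset.sum_congr rfl fun j _ => by ring
  -- value attained at δ = √γ ⬝ A
  have hδ0mul : ∀ i j, ∫ ω, (Real.sqrt γ * A ω i) * (Real.sqrt γ * A ω j) ∂ℙ
      = γ * ∫ ω, A ω i * A ω j ∂ℙ := by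
    intro i j
    have : (fun ω => (Real.sqrt γ * A ω i) * (Real.sqrt γ * A ω j))
        = fun ω => γ * (A ω i * A ω j) := by
      funext ω
      rw [mul_mul_mul_comm, Real.mul_self_sqrt hγ]
    rw [this, integral_const_mul]
  have hmem : regRisk b ∈ {x : ℝ | ∃ δ : Ω → Fin r → ℝ,
      (∀ j, MemLp (fun ω => δ ω j) 2 ℙ) ∧
      (∀ i j, ∫ ω, ε ω i * δ ω j ∂ℙ = 0) ∧
      (γ • (Matrix.of fun i j => ∫ ω, A ω i * A ω j ∂ℙ)
        - Matrix.of fun i j => ∫ ω, δ ω i * δ ω j ∂ℙ).PosSemidef ∧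
      x = ∫ ω, (res b (fun ω' => M.mulVec (δ ω')) ω) ^ 2 ∂ℙ} := by
    refine ⟨fun ω j => Real.sqrt γ * A ω j, fun j => (hA2 j).const_mul _, ?_, ?_, ?_⟩
    · intro i j
      have : (fun ω => ε ω i * (Real.sqrt γ * A ω j))
          = fun ω => Real.sqrt γ * (ε ω i * A ω j) := by
        funext ω; ring
      rw [this, integral_const_mul, hAortho, mul_zero]
    · have hz : (γ • (Matrix.of fun i j => ∫ ω, A ω i * A ω j ∂ℙ)
          - Matrix.of fun i j => ∫ ω, (Real.sqrt γ * A ω i) * (Real.sqrt γ * A ω j) ∂ℙ)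
          = 0 := by
        ext i j
        simp only [Matrix.sub_apply, Matrix.smul_apply, Matrix.of_apply, smul_eq_mul,
          Matrix.zero_apply, hδ0mul i j]
        ring
      rw [hz]
      exact Matrix.PosSemidef.zero
    · rw [hkey (fun ω j => Real.sqrt γ * A ω j) (fun j => (hA2 j).const_mul _)
        (by intro i j
            have : (fun ω => ε ω i * (Real.sqrt γ * A ω j))
                = fun ω => Real.sqrt γ * (ε ω i * A ω j) := by funext ω; ring
            rw [this, integral_const_mul, hAortho, mul_zero])]
      simp_rw [hδ0mul]
      rw [pull, hreg]
  -- upper bound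
  have hbound : ∀ x ∈ {x : ℝ | ∃ δ : Ω → Fin r → ℝ,
      (∀ j, MemLp (fun ω => δ ω j) 2 ℙ) ∧
      (∀ i j, ∫ ω, ε ω i * δ ω j ∂ℙ = 0) ∧
      (γ • (Matrix.of fun i j => ∫ ω, A ω i * A ω j ∂ℙ)
        - Matrix.of fun i j => ∫ ω, δ ω i * δ ω j ∂ℙ).PosSemidef ∧
      x = ∫ ω, (res b (fun ω' => M.mulVec (δ ω')) ω) ^ 2 ∂ℙ}, x ≤ regRisk b := by
    rintro x ⟨δ, hδ2, hortho, hpsd, rfl⟩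
    rw [hkey δ hδ2 hortho, hreg]
    have hq0 := hpsd.dotProduct_mulVec_nonneg u
    rw [show star u = u from funext fun i => star_trivial _, dotProduct_mulVec_eq] at hq0
    simp only [Matrix.sub_apply, Matrix.smul_apply, Matrix.of_apply, smul_eq_mul,
      mul_sub, Finset.sum_sub_distrib] at hq0
    rw [pull] at hq0
    linarith
  rw [hworstRisk b]
  exact le_antisymm (csSup_le ⟨regRisk b, hmem⟩ hbound)
    (le_csSup ⟨regRisk b, hbound⟩ hmem)
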